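/- Let R be a commutative ℚ-algebra with derivation δ, let g ∈ R, ε ≥ 1, and k ≥ 0. If g^ε lies in an ideal J ⊆ R, then each δ^j g for 0 ≤ j ≤ k lies in the radical of the ideal generated by the elements δ^m(h) for h a generator of J and 0 ≤ m ≤ kε. In particular, if g^ε ∈ J then δ^j g ∈ √(J + δJ + ⋯ + δ^{kε}J) for all 0 ≤ j ≤ k. -/
import Mathlib

open Finset

section Aux
variable {R : Type*} [CommRing R] [Algebra ℚ R]

private lemma iter_leibniz (δ : Derivation ℚ R R) (a b : R) (n : ℕ) :
    (⇑δ)^[n] (a * b) =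
      ∑ i ∈ range (n + 1), n.choose i • ((⇑δ)^[n - i] a * (⇑δ)^[i] b) := by
  induction n with
  | zero => simp
  | succ n IH =>
    calc
      (⇑δ)^[n + 1] (a * b) =
          δ (∑ i ∈ range (n + 1), n.choose i • ((⇑δ)^[n - i] a * (⇑δ)^[i] b)) := by
        rw [Function.iterate_succ_apply', IH]
      _ = (∑ i ∈ range (n + 1),
            n.choose i • ((⇑δ)^[n - i + 1] a * (⇑δ)^[i] b)) +
          ∑ i ∈ range (n + 1),
            n.choose i • ((⇑δ)^[n - i] a * (⇑δ)^[i + 1] b) := by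
        rw [map_sum]
        simp_rw [map_nsmul, Derivation.leibniz, smul_eq_mul, Function.iterate_succ_apply',
          smul_add, sum_add_distrib]
        rw [add_comm]
        congr 1
        exact sum_congr rfl fun i _ => by rw [mul_comm]
      _ = (∑ i ∈ range (n + 1),
                n.choose i.succ • ((⇑δ)^[n - i] a * (⇑δ)^[i + 1] b)) +
              1 • ((⇑δ)^[n + 1] a * (⇑δ)^[0] b) +
            ∑ i ∈ range (n + 1), n.choose i • ((⇑δ)^[n - i] a * (⇑δ)^[i + 1] b) :=
        ?_
      _ = ((∑ i ∈ range (n + 1), n.choose i • ((⇑δ)^[n - i] a * (⇑δ)^[i + 1] b)) +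
              ∑ i ∈ range (n + 1),
                n.choose i.succ • ((⇑δ)^[n - i] a * (⇑δ)^[i + 1] b)) +
            1 • ((⇑δ)^[n + 1] a * (⇑δ)^[0] b) := by
        rw [add_comm, add_assoc]
      _ = (∑ i ∈ range (n + 1),
              (n + 1).choose (i + 1) • ((⇑δ)^[n + 1 - (i + 1)] a * (⇑δ)^[i + 1] b)) +
            1 • ((⇑δ)^[n + 1] a * (⇑δ)^[0] b) := by
        simp_rw [Nat.choose_succ_succ, Nat.succ_sub_succ, add_smul, sum_add_distrib]
      _ = ∑ i ∈ range (n + 1 + 1),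
            (n + 1).choose i • ((⇑δ)^[n + 1 - i] a * (⇑δ)^[i] b) := by
        rw [sum_range_succ' _ (n + 1), Nat.choose_zero_right, tsub_zero]
    congr
    refine (sum_range_succ' _ _).trans (congr_arg₂ (· + ·) ?_ ?_)
    · rw [sum_range_succ, Nat.choose_succ_self, zero_smul, add_zero]
      refine sum_congr rfl fun i hi => ?_
      rw [mem_range] at hi
      congr
      omega
    · rw [Nat.choose_zero_right, tsub_zero]

private lemma key_lemma (δ : Derivation ℚ R R) (x : R) (j : ℕ) (P : Ideal R)
    (hx : ∀ i < j, (⇑δ)^[i] x ∈ P) (e : ℕ) :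
    (∀ n < j * e, (⇑δ)^[n] (x ^ e) ∈ P) ∧
      ∃ c : ℕ, 0 < c ∧ (⇑δ)^[j * e] (x ^ e) - (c : R) * ((⇑δ)^[j] x) ^ e ∈ P := by
  induction e with
  | zero =>
    refine ⟨by simp, 1, one_pos, by simp⟩
  | succ e ih =>
    obtain ⟨ih1, c, hc, ih2⟩ := ih
    have hsplit : ∀ n, (⇑δ)^[n] (x ^ (e + 1)) =
        ∑ i ∈ range (n + 1), n.choose i • ((⇑δ)^[n - i] x * (⇑δ)^[i] (x ^ e)) := by
      intro n; rw [pow_succ', iter_leibniz]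
    constructor
    · intro n hn
      rw [hsplit]
      refine Ideal.sum_mem _ fun i hi => ?_
      rw [mem_range] at hi
      by_cases h : n - i < j
      · exact nsmul_mem (Ideal.mul_mem_right _ _ (hx _ h)) _
      · have hie : i < j * e := by
          push_neg at h
          have : j * (e + 1) = j * e + j := by ring
          omega
        exact nsmul_mem (Ideal.mul_mem_left _ _ (ih1 _ hie)) _
    · refine ⟨(j * (e + 1)).choose (j * e) * c, Nat.mul_pos (Nat.choose_pos ?_) hc, ?_⟩
      · exact Nat.mul_le_mul_left _ (Nat.le_succ _)
      rw [hsplit]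
      have hmem : j * e ∈ range (j * (e + 1) + 1) := by
        rw [mem_range]
        have : j * e ≤ j * (e + 1) := Nat.mul_le_mul_left j (by omega)
        omega
      rw [← Finset.add_sum_erase _ _ hmem]
      have hsub : j * (e + 1) - j * e = j := by
        have : j * (e + 1) = j * e + j := by ring
        omega
      rw [hsub]
      have hrest : ∑ i ∈ (range (j * (e + 1) + 1)).erase (j * e),
          (j * (e + 1)).choose i • ((⇑δ)^[j * (e + 1) - i] x * (⇑δ)^[i] (x ^ e)) ∈ P := by
        refine Ideal.sum_mem _ fun i hi => ?_
        rw [mem_erase, mem_range] at hi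
        by_cases h : j * (e + 1) - i < j
        · exact nsmul_mem (Ideal.mul_mem_right _ _ (hx _ h)) _
        · have hie : i < j * e := by
            push_neg at h
            have : j * (e + 1) = j * e + j := by ring
            omega
          exact nsmul_mem (Ideal.mul_mem_left _ _ (ih1 _ hie)) _
      have hmain : (j * (e + 1)).choose (j * e) • ((⇑δ)^[j] x * (⇑δ)^[j * e] (x ^ e)) -
          (((j * (e + 1)).choose (j * e) * c : ℕ) : R) * ((⇑δ)^[j] x) ^ (e + 1) =
          (((j * (e + 1)).choose (j * e) : ℕ) : R) * (⇑δ)^[j] x *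
            ((⇑δ)^[j * e] (x ^ e) - (c : R) * ((⇑δ)^[j] x) ^ e) := by
        push_cast [nsmul_eq_mul]
        ring
      have : (j * (e + 1)).choose (j * e) • ((⇑δ)^[j] x * (⇑δ)^[j * e] (x ^ e)) +
          (∑ i ∈ (range (j * (e + 1) + 1)).erase (j * e),
            (j * (e + 1)).choose i • ((⇑δ)^[j * (e + 1) - i] x * (⇑δ)^[i] (x ^ e))) -
          (((j * (e + 1)).choose (j * e) * c : ℕ) : R) * ((⇑δ)^[j] x) ^ (e + 1) =
          ((((j * (e + 1)).choose (j * e) : ℕ) : R) * (⇑δ)^[j] x *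
            ((⇑δ)^[j * e] (x ^ e) - (c : R) * ((⇑δ)^[j] x) ^ e)) +
          ∑ i ∈ (range (j * (e + 1) + 1)).erase (j * e),
            (j * (e + 1)).choose i • ((⇑δ)^[j * (e + 1) - i] x * (⇑δ)^[i] (x ^ e)) := by
        rw [← hmain]; ring
      rw [this]
      exact Ideal.add_mem _ (Ideal.mul_mem_left _ _ ih2) hrest

end Aux

/-- if `g^ε ∈ J` for an ideal `J` of a commutative ℚ-algebra with
derivation `δ`, then for all `0 ≤ j ≤ k`, `δ^[j] g` lies in the radical of the
ideal generated by `δ^[m] h` for `h ∈ J` and `0 ≤ m ≤ kε`. -/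
theorem stmt_6 (R : Type*) [CommRing R] [Algebra ℚ R]
    (δ : Derivation ℚ R R) (g : R) (ε k : ℕ) (hε : 1 ≤ ε)
    (J : Ideal R) (hg : g ^ ε ∈ J) :
    ∀ j ≤ k, (⇑δ)^[j] g ∈
      (Ideal.span {r : R | ∃ h ∈ J, ∃ m ≤ k * ε, r = (⇑δ)^[m] h}).radical := by
  set P := (Ideal.span {r : R | ∃ h ∈ J, ∃ m ≤ k * ε, r = (⇑δ)^[m] h}).radical with hP
  intro j
  induction j using Nat.strong_induction_on with
  | _ j ih =>
    intro hjk
    have hx : ∀ i < j, (⇑δ)^[i] g ∈ P := fun i hi => ih i hi (hi.le.trans hjk)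
    obtain ⟨-, c, hc, hkey⟩ := key_lemma δ g j P hx ε
    have h1 : (⇑δ)^[j * ε] (g ^ ε) ∈ P := by
      refine Ideal.le_radical (Ideal.subset_span ?_)
      exact ⟨g ^ ε, hg, j * ε, Nat.mul_le_mul_right ε hjk, rfl⟩
    have h2 : (c : R) * ((⇑δ)^[j] g) ^ ε ∈ P := by
      have := P.sub_mem h1 hkey
      rwa [sub_sub_cancel] at this
    have hc0 : (c : ℚ) ≠ 0 := Nat.cast_ne_zero.mpr hc.ne'
    have h3 : ((⇑δ)^[j] g) ^ ε ∈ P := by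
      have heq : ((⇑δ)^[j] g) ^ ε =
          algebraMap ℚ R (c : ℚ)⁻¹ * ((c : R) * ((⇑δ)^[j] g) ^ ε) := by
        rw [← mul_assoc]
        have : (c : R) = algebraMap ℚ R (c : ℚ) := by
          rw [map_natCast]
        rw [this, ← map_mul, inv_mul_cancel₀ hc0, map_one, one_mul]
      rw [heq]
      exact Ideal.mul_mem_left _ _ h2
    have h4 : (⇑δ)^[j] g ∈ P.radical := ⟨ε, h3⟩
    rwa [hP, Ideal.radical_idem] at h4
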